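/- Let S = ℤ[x^{±1}], d ≥ 3, and m > 2. Then GL_d(S, J_m) = D_m · SL_d(S, J_m), where J_m = (x^m − 1)S + mS and D_m = {I_d + (x^{km} − 1)E_{1,1} : k ∈ ℤ}, and moreover D_m ∩ SL_d(S, J_m) = {I_d}. -/

import Mathlib

open LaurentPolynomial Matrix

noncomputable section

namespace GLAux

/-- Units of `ℤ[T,T⁻¹]` are `± T n`. -/
theorem units_laurent (f : LaurentPolynomial ℤ) (hf : IsUnit f) :
    ∃ n : ℤ, f = T n ∨ f = -T n := by
  obtain ⟨g, hg⟩ := hf.exists_right_inv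
  obtain ⟨a, p, hp⟩ := f.exists_T_pow
  obtain ⟨b, q, hq⟩ := g.exists_T_pow
  have hpq : p * q = Polynomial.X ^ (a + b) := by
    apply Polynomial.toLaurent_injective
    rw [_root_.map_mul, hp, hq, Polynomial.toLaurent_X_pow]
    calc f * T (a:ℤ) * (g * T (b:ℤ)) = (f * g) * (T (a:ℤ) * T (b:ℤ)) := by ring
    _ = T ((a:ℤ) + b) := by rw [hg, one_mul, ← T_add]
    _ = T ((a + b : ℕ) : ℤ) := by push_cast; ring_nf
  obtain ⟨i, _, u, hu⟩ := (dvd_prime_pow Polynomial.prime_X (a + b)).mp ⟨q, hpq.symm⟩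
  obtain ⟨r, hr, hCr⟩ := Polynomial.isUnit_iff.mp u.isUnit
  rw [← hCr] at hu
  have hr' : r = 1 ∨ r = -1 := Int.isUnit_iff.mp hr
  have hf' : f = Polynomial.toLaurent p * T (-(a:ℤ)) := by
    rw [hp, mul_T_assoc]; simp
  refine ⟨(i : ℤ) - a, ?_⟩
  rcases hr' with h | h
  · left
    have hpX : p = Polynomial.X ^ i := by simpa [h] using hu
    rw [hf', hpX, Polynomial.toLaurent_X_pow, ← T_sub]
  · right
    have hpX : p = -Polynomial.X ^ i := by
      have := hu
      rw [h] at this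
      simp only [map_neg, Polynomial.C_1, mul_neg, mul_one] at this
      linear_combination -this
    rw [hf', hpX, map_neg, Polynomial.toLaurent_X_pow, neg_mul, ← T_sub]

end GLAux

namespace GLAux

variable (m : ℕ)

/-- The relevant ideal `J_m`. -/
def J (m : ℕ) : Ideal (LaurentPolynomial ℤ) :=
  Ideal.span ({T (m : ℤ) - 1, (m : LaurentPolynomial ℤ)} : Set (LaurentPolynomial ℤ))

/-- The reduction map `ℤ[T,T⁻¹] → (ℤ/m)[ℤ/m]`. -/
def phi (m : ℕ) : LaurentPolynomial ℤ →+* AddMonoidAlgebra (ZMod m) (ZMod m) :=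
  AddMonoidAlgebra.liftNCRingHom (Int.castRingHom _)
    ((AddMonoidAlgebra.of (ZMod m) (ZMod m)).comp
      (AddMonoidHom.toMultiplicative (Int.castAddHom (ZMod m))))
    fun _ _ => Commute.all _ _

lemma phi_T (n : ℤ) : phi m (T n) = AddMonoidAlgebra.single ((n : ZMod m)) 1 := by
  show AddMonoidAlgebra.liftNC _ _ (AddMonoidAlgebra.single n (1:ℤ)) = _
  rw [AddMonoidAlgebra.liftNC_single]
  simp [AddMonoidAlgebra.of_apply]

lemma phi_J {f : LaurentPolynomial ℤ} (hf : f ∈ J m) : phi m f = 0 := by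
  have hle : J m ≤ RingHom.ker (phi m) := by
    rw [J, Ideal.span_le]
    rintro x hx
    simp only [Set.mem_insert_iff, Set.mem_singleton_iff] at hx
    rcases hx with rfl | rfl
    · simp only [SetLike.mem_coe, RingHom.mem_ker, map_sub, _root_.map_one, phi_T]
      have h1 : ((m : ℤ) : ZMod m) = 0 := by
        push_cast
        exact ZMod.natCast_self m
      rw [h1, sub_eq_zero]
      exact AddMonoidAlgebra.one_def.symm
    · simp only [SetLike.mem_coe, RingHom.mem_ker, map_natCast]
      have : ((m : ZMod m)) = 0 := ZMod.natCast_self m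
      calc ((m : ℕ) : AddMonoidAlgebra (ZMod m) (ZMod m))
          = algebraMap (ZMod m) _ ((m : ℕ) : ZMod m) := (map_natCast _ m).symm
        _ = 0 := by rw [this, map_zero]
  exact hle hf

end GLAux

namespace GLAux

lemma phi_eq_one {m : ℕ} {f : LaurentPolynomial ℤ} (hf : f - 1 ∈ J m) : phi m f = 1 := by
  have := phi_J m hf
  rw [map_sub, _root_.map_one, sub_eq_zero] at this
  exact this

/-- A unit congruent to 1 mod `J_m` has determinant `T (k*m)`. -/
lemma unit_cong_one {m : ℕ} (hm : 2 < m) {u : LaurentPolynomial ℤ} (hu : IsUnit u)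
    (h : u - 1 ∈ J m) : ∃ k : ℤ, u = T (k * m) := by
  haveI : Fact (1 < m) := ⟨by omega⟩
  haveI : NeZero m := ⟨by omega⟩
  obtain ⟨n, hn | hn⟩ := units_laurent u hu
  · -- u = T n
    have h1 : (AddMonoidAlgebra.single ((n : ZMod m)) 1 : AddMonoidAlgebra (ZMod m) (ZMod m))
        = AddMonoidAlgebra.single 0 1 := by
      rw [← phi_T, ← hn, phi_eq_one h, AddMonoidAlgebra.one_def]
    have h2 : ((n : ZMod m)) = 0 := by
      rcases AddMonoidAlgebra.single_inj.mp h1 with ⟨h', _⟩ | ⟨h', _⟩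
      · exact h'
      · exact absurd h' one_ne_zero
    obtain ⟨k, hk⟩ := (ZMod.intCast_zmod_eq_zero_iff_dvd n m).mp h2
    exact ⟨k, by rw [hn, hk, mul_comm]⟩
  · -- u = -T n, impossible
    exfalso
    have h1 : (-AddMonoidAlgebra.single ((n : ZMod m)) 1 : AddMonoidAlgebra (ZMod m) (ZMod m))
        = AddMonoidAlgebra.single 0 1 := by
      rw [← phi_T, ← _root_.map_neg (phi m) (T n), ← hn, phi_eq_one h,
        AddMonoidAlgebra.one_def]
    have h2 := DFunLike.congr_fun (congrArg AddMonoidAlgebra.coeff h1) ((n : ZMod m))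
    by_cases hn0 : ((n : ZMod m)) = 0
    · rw [hn0] at h2
      simp only [AddMonoidAlgebra.coeff_neg, AddMonoidAlgebra.coeff_single, Finsupp.coe_neg, Pi.neg_apply, Finsupp.single_eq_same] at h2
      have : ((2 : ℕ) : ZMod m) = 0 := by
        push_cast
        linear_combination -h2
      have h4 := (ZMod.natCast_eq_zero_iff 2 m).mp this
      exact absurd (Nat.le_of_dvd (by norm_num) h4) (by omega)
    · simp only [AddMonoidAlgebra.coeff_neg, AddMonoidAlgebra.coeff_single, Finsupp.coe_neg, Pi.neg_apply, Finsupp.single_eq_same,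
        Finsupp.single_apply] at h2
      rw [if_neg (fun hh => hn0 hh.symm)] at h2
      exact one_ne_zero (by linear_combination -h2 : (1 : ZMod m) = 0)

lemma T_mul_mem (m : ℕ) (k : ℤ) : T (k * m) - 1 ∈ J m := by
  rw [← Ideal.Quotient.eq_zero_iff_mem, map_sub, _root_.map_one, sub_eq_zero]
  have hTm : Ideal.Quotient.mk (J m) (T (m : ℤ)) = 1 := by
    rw [← _root_.map_one (Ideal.Quotient.mk (J m)), Ideal.Quotient.mk_eq_mk_iff_sub_mem]
    exact Ideal.subset_span (by simp [Set.mem_insert_iff])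
  have hTneg : Ideal.Quotient.mk (J m) (T (-(m : ℤ))) = 1 := by
    have h0 : T (-(m:ℤ)) * T (m:ℤ) = (1 : LaurentPolynomial ℤ) := by
      rw [← T_add]; simp
    have := congrArg (Ideal.Quotient.mk (J m)) h0
    rw [_root_.map_mul, hTm, mul_one, _root_.map_one] at this
    exact this
  induction k using Int.induction_on with
  | zero => simp
  | succ i ih =>
    have : ((i : ℤ) + 1) * m = (i : ℤ) * m + m := by ring
    rw [this, T_add, _root_.map_mul, ih, hTm, mul_one]
  | pred i ih =>
    have : (-(i : ℤ) - 1) * m = (-(i : ℤ)) * m + -(m : ℤ) := by ring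
    rw [this, T_add, _root_.map_mul, ih, hTneg, mul_one]

end GLAux

namespace GLAux

variable {R : Type*} [CommRing R]

lemma one_add_std_eq_diag {d : ℕ} (i : Fin d) (c : R) :
    (1 + Matrix.single i i c : Matrix (Fin d) (Fin d) R)
      = diagonal (fun j => if j = i then 1 + c else 1) := by
  ext a b
  by_cases hab : a = b
  · subst hab
    by_cases h : a = i
    · subst h
      simp [Matrix.single, diagonal, one_apply]
    · simp only [Matrix.single, diagonal, one_apply, h, if_false, of_apply, Matrix.add_apply,
        if_true, Matrix.one_apply_eq]
      rw [if_neg (fun hh : i = a ∧ i = a => h hh.1.symm), add_zero]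
  · simp only [Matrix.single, diagonal, of_apply, Matrix.add_apply, Matrix.one_apply_ne hab,
      if_neg hab, zero_add]
    rw [if_neg (fun hh : i = a ∧ i = b => hab (hh.1.symm.trans hh.2))]

lemma det_one_add_std {d : ℕ} (i : Fin d) (c : R) :
    (1 + Matrix.single i i c : Matrix (Fin d) (Fin d) R).det = 1 + c := by
  rw [one_add_std_eq_diag, det_diagonal]
  rw [Finset.prod_eq_single i (fun b _ hb => by simp [hb]) (fun h => absurd (Finset.mem_univ i) h)]
  simp

lemma std_mul_std {d : ℕ} (i : Fin d) (a b : R) :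
    (1 + Matrix.single i i a) * (1 + Matrix.single i i b)
      = 1 + Matrix.single i i (a + b + a * b) := by
  rw [mul_add, add_mul, add_mul, one_mul, mul_one, Matrix.single_mul_single_same,
    Matrix.single_add, Matrix.single_add, one_mul]
  abel

end GLAux

end

theorem GL_rel_eq_D_mul_SL_rel (d m : ℕ) (hd : 3 ≤ d) (hm : 2 < m) :
    (∀ M : Matrix (Fin d) (Fin d) (LaurentPolynomial ℤ), IsUnit M →
      (∀ p q, M p q - (1 : Matrix (Fin d) (Fin d) (LaurentPolynomial ℤ)) p q ∈
        Ideal.span ({T (m : ℤ) - 1, (m : LaurentPolynomial ℤ)} : Set (LaurentPolynomial ℤ))) →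
      ∃ (k : ℤ) (B : Matrix (Fin d) (Fin d) (LaurentPolynomial ℤ)),
        B.det = 1 ∧
        (∀ p q, B p q - (1 : Matrix (Fin d) (Fin d) (LaurentPolynomial ℤ)) p q ∈
          Ideal.span ({T (m : ℤ) - 1, (m : LaurentPolynomial ℤ)} : Set (LaurentPolynomial ℤ))) ∧
        M = (1 + Matrix.single (⟨0, by omega⟩ : Fin d) (⟨0, by omega⟩ : Fin d)
          (T (k * m) - 1)) * B) ∧
    (∀ k : ℤ,
      (1 + Matrix.single (⟨0, by omega⟩ : Fin d) (⟨0, by omega⟩ : Fin d)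
          (T (k * m) - 1) : Matrix (Fin d) (Fin d) (LaurentPolynomial ℤ)).det = 1 →
      (1 + Matrix.single (⟨0, by omega⟩ : Fin d) (⟨0, by omega⟩ : Fin d)
          (T (k * m) - 1) : Matrix (Fin d) (Fin d) (LaurentPolynomial ℤ)) = 1) := by
  have hJ : Ideal.span ({T (m : ℤ) - 1, (m : LaurentPolynomial ℤ)} : Set (LaurentPolynomial ℤ))
      = GLAux.J m := rfl
  constructor
  · intro M hM hMJ
    simp only [hJ] at hMJ ⊢
    set i0 : Fin d := ⟨0, by omega⟩ with hi0
    set Q : Matrix (Fin d) (Fin d) (LaurentPolynomial ℤ)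
        →+* Matrix (Fin d) (Fin d) (LaurentPolynomial ℤ ⧸ GLAux.J m) :=
      (Ideal.Quotient.mk (GLAux.J m)).mapMatrix with hQ
    have entry_iff : ∀ N : Matrix (Fin d) (Fin d) (LaurentPolynomial ℤ),
        (∀ p r, N p r - (1 : Matrix (Fin d) (Fin d) (LaurentPolynomial ℤ)) p r ∈ GLAux.J m)
          ↔ Q N = Q 1 := by
      intro N
      constructor
      · intro h
        ext p r
        simp only [hQ, RingHom.mapMatrix_apply, Matrix.map_apply]
        exact (Ideal.Quotient.mk_eq_mk_iff_sub_mem _ _).mpr (h p r)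
      · intro h p r
        rw [← Ideal.Quotient.mk_eq_mk_iff_sub_mem]
        have h2 := congrFun (congrFun h p) r
        simpa only [hQ, RingHom.mapMatrix_apply, Matrix.map_apply] using h2
    have hM1 : Q M = Q 1 := (entry_iff M).mp hMJ
    have hdet1 : M.det - 1 ∈ GLAux.J m := by
      rw [← Ideal.Quotient.mk_eq_mk_iff_sub_mem]
      calc (Ideal.Quotient.mk (GLAux.J m)) M.det
          = (Q M).det := RingHom.map_det _ M
        _ = (Q 1).det := by rw [hM1]
        _ = (Ideal.Quotient.mk (GLAux.J m))
              (1 : Matrix (Fin d) (Fin d) (LaurentPolynomial ℤ)).det :=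
            (RingHom.map_det _ _).symm
        _ = (Ideal.Quotient.mk (GLAux.J m)) 1 := by rw [Matrix.det_one]
    obtain ⟨k, hk⟩ := GLAux.unit_cong_one hm ((Matrix.isUnit_iff_isUnit_det M).mp hM) hdet1
    set D' : Matrix (Fin d) (Fin d) (LaurentPolynomial ℤ) :=
      1 + Matrix.single i0 i0 (T (-k * m) - 1) with hD'def
    have hD'J : ∀ p r, D' p r - (1 : Matrix (Fin d) (Fin d) (LaurentPolynomial ℤ)) p r
        ∈ GLAux.J m := by
      intro p r
      have : D' p r - (1 : Matrix (Fin d) (Fin d) (LaurentPolynomial ℤ)) p r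
          = Matrix.single i0 i0 (T (-k * m) - 1) p r := by
        simp [hD'def, Matrix.add_apply]
      rw [this]
      simp only [Matrix.single, of_apply]
      split_ifs
      · exact GLAux.T_mul_mem m (-k)
      · exact zero_mem _
    refine ⟨k, D' * M, ?_, ?_, ?_⟩
    · rw [det_mul, hD'def, GLAux.det_one_add_std, hk,
        show (1 : LaurentPolynomial ℤ) + (T (-k * (m:ℤ)) - 1) = T (-k * m) by ring,
        ← T_add, show -k * (m:ℤ) + k * m = 0 by ring, T_zero]
    · rw [entry_iff]
      rw [_root_.map_mul, (entry_iff D').mp hD'J, hM1, ← _root_.map_mul, one_mul]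
    · have hTT : (T (k * (m:ℤ)) * T (-k * m) : LaurentPolynomial ℤ) = 1 := by
        rw [← T_add, show k * (m:ℤ) + -k * m = 0 by ring, T_zero]
      have hDD' : (1 + Matrix.single i0 i0 (T (k * (m:ℤ)) - 1)) * D' = 1 := by
        rw [hD'def, GLAux.std_mul_std]
        have hs : ((T (k * (m:ℤ)) - 1) + (T (-k * (m:ℤ)) - 1)
            + (T (k * (m:ℤ)) - 1) * (T (-k * (m:ℤ)) - 1) : LaurentPolynomial ℤ) = 0 := by
          linear_combination hTT
        rw [hs, Matrix.single_zero, add_zero]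
      rw [← mul_assoc, hDD', one_mul]
  · intro k hdet
    rw [GLAux.det_one_add_std] at hdet
    have h1 : (T (k * (m:ℤ)) - 1 : LaurentPolynomial ℤ) = 0 := by linear_combination hdet
    rw [h1, Matrix.single_zero, add_zero]
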